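/- arXiv:2507.03813 — 2 statements merged into one kernel-verified Lean document; each statement's English description precedes it below -/
import Mathlib

section
/- Let P(x) ∈ ℂ[x] be a polynomial and let h, r be integers with h ≠ 0 such that the h-th powers r_1^h, ..., r_m^h of the roots of the characteristic polynomial are pairwise distinct and none of them equals 1. Then there exist m+1 polynomials P_1(x), P_2(x), ..., P_{m+1}(x) ∈ ℂ[x] such that for every positive integer n, ∑_{k=1}^{n} P(k)·s_{hk+r} = (∑_{k=1}^{m} P_k(n)·s_{(n+k)h+r}) + P_{m+1}(n). -/
open Polynomial Matrix


lemma tele_exists_aux (x : ℂ) (hx0 : x ≠ 0) (hx1 : x ≠ 1) :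
    ∀ n : ℕ, ∀ P : Polynomial ℂ, P.natDegree ≤ n →
      ∃ A : Polynomial ℂ, ∀ y : ℂ, x * A.eval y - A.eval (y - 1) = x * P.eval y := by
  have hx1' : x - 1 ≠ 0 := sub_ne_zero.mpr hx1
  intro n
  induction n with
  | zero =>
    intro P hP
    refine ⟨C (x * P.coeff 0 / (x - 1)), fun y => ?_⟩
    rw [Polynomial.eq_C_of_natDegree_le_zero hP]
    simp only [eval_C, coeff_C_zero]
    field_simp
  | succ n ih =>
    intro P hP
    set p := P.coeff (n + 1) with hp
    set cc := x * p / (x - 1) with hcc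
    set A₀ : Polynomial ℂ := C cc * X ^ (n + 1) with hA₀
    set R : Polynomial ℂ := C x * P - (C x * A₀ - A₀.comp (X - C 1)) with hR
    have hcomp : A₀.comp (X - C 1) = C cc * (X - C 1) ^ (n + 1) := by
      simp [hA₀]
    have hRd : R.natDegree ≤ n + 1 := by
      apply le_trans (Polynomial.natDegree_sub_le _ _)
      refine max_le (le_trans (Polynomial.natDegree_C_mul_le _ _) hP) ?_
      apply le_trans (Polynomial.natDegree_sub_le _ _)
      refine max_le (le_trans (Polynomial.natDegree_C_mul_le _ _) ?_) ?_
      · exact le_trans (Polynomial.natDegree_C_mul_le _ _)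
          (by rw [Polynomial.natDegree_X_pow])
      · rw [hcomp]
        refine le_trans (Polynomial.natDegree_C_mul_le _ _)
          (le_trans (Polynomial.natDegree_pow_le) ?_)
        rw [Polynomial.natDegree_X_sub_C]
        simp
    have hRc : R.coeff (n + 1) = 0 := by
      have h1 : (C x * P).coeff (n+1) = x * p := by rw [Polynomial.coeff_C_mul]
      have h2 : (C x * A₀).coeff (n+1) = x * cc := by
        rw [Polynomial.coeff_C_mul, hA₀, Polynomial.coeff_C_mul, Polynomial.coeff_X_pow]
        simp
      have h3 : (A₀.comp (X - C 1)).coeff (n+1) = cc := by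
        rw [hcomp, Polynomial.coeff_C_mul]
        have : ((X - C 1 : Polynomial ℂ) ^ (n+1)).coeff (n+1) = 1 := by
          have hm : ((X - C (1:ℂ)) ^ (n+1)).Monic := (monic_X_sub_C 1).pow _
          have hd : ((X - C (1:ℂ)) ^ (n+1)).natDegree = n + 1 := by
            rw [Polynomial.natDegree_pow, Polynomial.natDegree_X_sub_C, mul_one]
          have h4 := hm.coeff_natDegree
          rw [hd] at h4; exact h4
        rw [this, mul_one]
      rw [hR]
      simp only [Polynomial.coeff_sub, h1, h2, h3]
      rw [hcc]; field_simp
      ring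
    have hRd' : R.natDegree ≤ n := by
      rw [Polynomial.natDegree_le_iff_coeff_eq_zero]
      intro N hN
      rcases eq_or_lt_of_le (Nat.succ_le_of_lt hN) with h | h
      · rw [← h]; exact hRc
      · exact Polynomial.coeff_eq_zero_of_natDegree_lt (lt_of_le_of_lt hRd h)
    obtain ⟨A₁, hA₁⟩ := ih (C x⁻¹ * R) (le_trans (Polynomial.natDegree_C_mul_le _ _) hRd')
    refine ⟨A₀ + A₁, fun y => ?_⟩
    have := hA₁ y
    rw [Polynomial.eval_mul, Polynomial.eval_C] at this
    have hxR : x * (x⁻¹ * R.eval y) = R.eval y := by field_simp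
    rw [hxR] at this
    have hRe : R.eval y = x * P.eval y - (x * A₀.eval y - A₀.eval (y - 1)) := by
      rw [hR]
      simp [Polynomial.eval_comp]
    simp only [Polynomial.eval_add]
    rw [hRe] at this
    linear_combination this


lemma tele_sum (x : ℂ) (P A : Polynomial ℂ)
    (hA : ∀ y : ℂ, x * A.eval y - A.eval (y - 1) = x * P.eval y) (n : ℕ) :
    ∑ k ∈ Finset.Icc 1 n, P.eval (k : ℂ) * x ^ k = A.eval (n : ℂ) * x ^ n - A.eval 0 := by
  induction n with
  | zero => simp
  | succ n ih =>
    rw [Finset.sum_Icc_succ_top (by omega : 1 ≤ n + 1), ih]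
    have := hA ((n:ℂ) + 1)
    push_cast
    have h2 : ((n:ℂ) + 1 - 1) = (n : ℂ) := by ring
    rw [h2] at this
    linear_combination - this * x ^ n

lemma vand_unit (m : ℕ) (z : Fin m → ℂ) (hz : Function.Injective z) (hz0 : ∀ i, z i ≠ 0) :
    IsUnit ((Matrix.diagonal z * Matrix.vandermonde z)ᵀ).det := by
  rw [Matrix.det_transpose, Matrix.det_mul, Matrix.det_diagonal, Matrix.det_vandermonde]
  apply IsUnit.mul
  · exact (Finset.prod_ne_zero_iff.mpr (fun i _ => hz0 i)).isUnit
  · refine (Finset.prod_ne_zero_iff.mpr (fun i _ => ?_)).isUnit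
    exact Finset.prod_ne_zero_iff.mpr (fun j hj => sub_ne_zero.mpr
      (fun e => absurd (hz e) (Finset.mem_Ioi.mp hj).ne'))

lemma vand_entry (m : ℕ) (z : Fin m → ℂ) (j i : Fin m) :
    ((Matrix.diagonal z * Matrix.vandermonde z)ᵀ) j i = z i ^ ((j:ℕ) + 1) := by
  simp [Matrix.transpose_apply, Matrix.diagonal_mul, Matrix.vandermonde, pow_succ, mul_comm]


/-- Theorem 1 of the paper. Let `m ≥ 2` and let `(s_k)_{k∈ℤ}` satisfy a
homogeneous linear recurrence of minimal degree `m` with `a_1 ≠ 0`, with `s_1,…,s_m` not all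
zero, whose characteristic polynomial has `m` distinct roots `rt 0, …, rt (m-1)`. Let `P ∈ ℂ[x]`
and `h, r ∈ ℤ` with `h ≠ 0`, the `h`-th powers of the roots pairwise distinct and none equal
to `1`. Then there exist polynomials `P_1,…,P_m` (here `Ps`) and `P_{m+1}` (here `Q`) such that
`∑_{k=1}^n P(k)·s_{hk+r} = ∑_{k=1}^m P_k(n)·s_{(n+k)h+r} + P_{m+1}(n)` for all `n ≥ 1`. -/
theorem stmt_0 (m : ℕ) (hm : 2 ≤ m) (a : Fin m → ℂ)
    (ha1 : a ⟨0, by omega⟩ ≠ 0)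
    (s : ℤ → ℂ)
    (hrec : ∀ k : ℤ, s (k + m) = ∑ i : Fin m, a i * s (k + (i : ℕ)))
    (hmin : ∀ d : ℕ, d < m → ∀ b : Fin d → ℂ,
      ¬ (∀ k : ℤ, s (k + d) = ∑ i : Fin d, b i * s (k + (i : ℕ))))
    (hs : ∃ i ∈ Finset.Icc (1 : ℤ) (m : ℤ), s i ≠ 0)
    (rt : Fin m → ℂ)
    (hroot : ∀ i, rt i ^ m = ∑ j : Fin m, a j * rt i ^ (j : ℕ))
    (hrt : Function.Injective rt)
    (P : Polynomial ℂ) (h r : ℤ) (hh : h ≠ 0)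
    (hdist : ∀ i j : Fin m, rt i ^ h = rt j ^ h → i = j)
    (hne1 : ∀ i : Fin m, rt i ^ h ≠ 1) :
    ∃ (Ps : Fin m → Polynomial ℂ) (Q : Polynomial ℂ),
      ∀ n : ℕ, 0 < n →
        ∑ k ∈ Finset.Icc 1 n, P.eval (k : ℂ) * s (h * (k : ℤ) + r) =
          (∑ k : Fin m, (Ps k).eval (n : ℂ) * s (((n : ℤ) + ((k : ℕ) : ℤ) + 1) * h + r))
            + Q.eval (n : ℂ) := by
  classical
  have hm0 : 0 < m := by omega
  -- roots are nonzero
  have hrt0 : ∀ i, rt i ≠ 0 := by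
    intro i hi
    have h0 := hroot i
    rw [hi, zero_pow (by omega : m ≠ 0)] at h0
    have hsum : ∑ j : Fin m, a j * (0:ℂ) ^ (j:ℕ) = a ⟨0, hm0⟩ := by
      rw [Finset.sum_eq_single (⟨0, hm0⟩ : Fin m)]
      · simp
      · intro b _ hb
        have hb' : (b:ℕ) ≠ 0 := fun e => hb (Fin.ext e)
        rw [zero_pow hb', mul_zero]
      · intro habs; exact absurd (Finset.mem_univ _) habs
    rw [hsum] at h0
    exact ha1 h0.symm
  -- solve for the coefficients c
  set M : Matrix (Fin m) (Fin m) ℂ := (Matrix.diagonal rt * Matrix.vandermonde rt)ᵀ with hM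
  have hMdet := vand_unit m rt hrt hrt0
  set c : Fin m → ℂ := M⁻¹.mulVec (fun j => s ((j:ℕ) + 1)) with hc
  have hMc : M.mulVec c = fun j : Fin m => s (((j:ℕ):ℤ) + 1) := by
    rw [hc, Matrix.mulVec_mulVec, Matrix.mul_nonsing_inv _ hMdet, Matrix.one_mulVec]
  have hwin : ∀ j : Fin m, s (((j:ℕ):ℤ) + 1) = ∑ i, c i * rt i ^ ((((j:ℕ)) : ℤ) + 1) := by
    intro j
    have h1 := congrFun hMc j
    rw [Matrix.mulVec, dotProduct] at h1
    rw [← h1]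
    refine Finset.sum_congr rfl (fun i _ => ?_)
    rw [hM, vand_entry]
    have h2 : (((j:ℕ):ℤ) + 1) = (((j:ℕ) + 1 : ℕ) : ℤ) := by push_cast; ring
    rw [h2, zpow_natCast]
    ring
  -- the candidate solution
  set f : ℤ → ℂ := fun k => ∑ i, c i * rt i ^ k with hf
  have hfrec : ∀ k : ℤ, f (k + m) = ∑ j : Fin m, a j * f (k + (j:ℕ)) := by
    intro k
    simp only [hf]
    calc ∑ i, c i * rt i ^ (k + (m:ℤ))
        = ∑ i, ∑ j : Fin m, c i * rt i ^ k * (a j * rt i ^ (j:ℕ)) := by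
          refine Finset.sum_congr rfl (fun i _ => ?_)
          rw [← Finset.mul_sum, ← hroot i, zpow_add₀ (hrt0 i), zpow_natCast]
          ring
      _ = ∑ j : Fin m, ∑ i, c i * rt i ^ k * (a j * rt i ^ (j:ℕ)) := Finset.sum_comm
      _ = ∑ j : Fin m, a j * ∑ i, c i * rt i ^ (k + ((j:ℕ):ℤ)) := by
          refine Finset.sum_congr rfl (fun j _ => ?_)
          rw [Finset.mul_sum]
          refine Finset.sum_congr rfl (fun i _ => ?_)
          rw [zpow_add₀ (hrt0 i), zpow_natCast]
          ring
  -- the difference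
  set d : ℤ → ℂ := fun k => s k - f k with hd
  have hdrec : ∀ k : ℤ, d (k + m) = ∑ j : Fin m, a j * d (k + (j:ℕ)) := by
    intro k
    simp only [hd, hrec k, hfrec k, ← Finset.sum_sub_distrib]
    exact Finset.sum_congr rfl (fun j _ => by ring)
  have hdwin : ∀ k : ℤ, 1 ≤ k → k ≤ m → d k = 0 := by
    intro k h1 h2
    have hk : k - 1 < (m:ℤ) := by omega
    set j : Fin m := ⟨(k-1).toNat, by omega⟩ with hj
    have hkj : k = ((j:ℕ):ℤ) + 1 := by simp [hj]; omega
    rw [hkj]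
    simp only [hd]
    rw [hwin j]
    exact sub_self _
  have hdzero : ∀ n : ℕ, ∀ k : ℤ, 1 - n ≤ k → k ≤ m + n → d k = 0 := by
    intro n
    induction n with
    | zero => intro k h1 h2; exact hdwin k (by omega) (by omega)
    | succ n ih =>
      intro k h1 h2
      by_cases hc1 : 1 - (n:ℤ) ≤ k ∧ k ≤ m + n
      · exact ih k hc1.1 hc1.2
      · push_neg at hc1
        by_cases hc2 : k ≤ (m:ℤ) + n
        · -- k = -n, backward step
          have hkn : k = -(n:ℤ) := by omega
          have h3 := hdrec k
          have h4 : d (k + m) = 0 := ih (k + m) (by omega) (by omega)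
          have h5 : ∑ j : Fin m, a j * d (k + (j:ℕ)) = a ⟨0, hm0⟩ * d k := by
            rw [Finset.sum_eq_single (⟨0, hm0⟩ : Fin m)]
            · simp
            · intro b _ hb
              have hb' : 1 ≤ (b:ℕ) := by
                rcases Nat.eq_zero_or_pos (b:ℕ) with hb0 | hb0
                · exact absurd (Fin.ext hb0) hb
                · exact hb0
              have : d (k + (b:ℕ)) = 0 := ih _ (by omega) (by
                have := b.isLt; omega)
              rw [this, mul_zero]
            · intro habs; exact absurd (Finset.mem_univ _) habs
          rw [h4, h5] at h3
          have := mul_eq_zero.mp h3.symm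
          rcases this with h6 | h6
          · exact absurd h6 ha1
          · exact h6
        · -- k = m + n + 1, forward step
          have hkn : k = (m:ℤ) + n + 1 := by omega
          have h3 := hdrec (k - m)
          rw [sub_add_cancel] at h3
          rw [h3]
          refine Finset.sum_eq_zero (fun j _ => ?_)
          have : d (k - m + (j:ℕ)) = 0 := ih _ (by omega) (by
            have := j.isLt; omega)
          rw [this, mul_zero]
  have hsrep : ∀ k : ℤ, s k = ∑ i, c i * rt i ^ k := by
    intro k
    have h0 := hdzero (k.natAbs + m) k (by omega) (by omega)
    simp only [hd, hf] at h0
    exact sub_eq_zero.mp h0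
  -- powers x i = rt i ^ h
  have hx0 : ∀ i : Fin m, rt i ^ h ≠ 0 := fun i => zpow_ne_zero h (hrt0 i)
  have hxinj : Function.Injective (fun i => rt i ^ h) := fun i j e => hdist i j e
  -- telescoping polynomials
  have hAex : ∀ i : Fin m, ∃ A : Polynomial ℂ,
      ∀ y : ℂ, (rt i ^ h) * A.eval y - A.eval (y - 1) = (rt i ^ h) * P.eval y :=
    fun i => tele_exists_aux (rt i ^ h) (hx0 i) (hne1 i) P.natDegree P le_rfl
  choose A hA using hAex
  -- inverse matrix for recovering c i * rt i ^ (h n + r)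
  set N : Matrix (Fin m) (Fin m) ℂ :=
    (Matrix.diagonal (fun i => rt i ^ h) * Matrix.vandermonde (fun i => rt i ^ h))ᵀ with hN
  have hNdet := vand_unit m (fun i => rt i ^ h) hxinj hx0
  have hkey : ∀ n : ℕ, ∀ i : Fin m,
      c i * rt i ^ (h * (n:ℤ) + r) =
        ∑ j : Fin m, N⁻¹ i j * s (((n:ℤ) + ((j:ℕ):ℤ) + 1) * h + r) := by
    intro n i
    set v : Fin m → ℂ := fun i => c i * rt i ^ (h * (n:ℤ) + r) with hv
    have hNv : N.mulVec v = fun j : Fin m => s (((n:ℤ) + ((j:ℕ):ℤ) + 1) * h + r) := by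
      funext j
      rw [Matrix.mulVec, dotProduct]
      rw [hsrep (((n:ℤ) + ((j:ℕ):ℤ) + 1) * h + r)]
      refine Finset.sum_congr rfl (fun i' _ => ?_)
      rw [hN, vand_entry]
      simp only [hv]
      have e1 : (rt i' ^ h) ^ ((j:ℕ) + 1) = rt i' ^ (h * (((j:ℕ):ℤ) + 1)) := by
        rw [_root_.zpow_mul]
        norm_cast
      rw [e1, ← mul_assoc, mul_comm _ (c i'), mul_assoc, ← zpow_add₀ (hrt0 i')]
      congr 1
      ring
    have hvinv : v = N⁻¹.mulVec (fun j : Fin m => s (((n:ℤ) + ((j:ℕ):ℤ) + 1) * h + r)) := by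
      rw [← hNv, Matrix.mulVec_mulVec, Matrix.nonsing_inv_mul _ hNdet, Matrix.one_mulVec]
    have := congrFun hvinv i
    rw [Matrix.mulVec, dotProduct] at this
    exact this
  -- final assembly
  refine ⟨fun j => ∑ i, Polynomial.C (N⁻¹ i j) * A i,
    Polynomial.C (- ∑ i, c i * rt i ^ r * (A i).eval 0), fun n _ => ?_⟩
  have step1 : ∑ k ∈ Finset.Icc 1 n, P.eval (k : ℂ) * s (h * (k:ℤ) + r)
      = ∑ i, (c i * rt i ^ r) * ((A i).eval (n:ℂ) * (rt i ^ h) ^ n - (A i).eval 0) := by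
    calc ∑ k ∈ Finset.Icc 1 n, P.eval (k : ℂ) * s (h * (k:ℤ) + r)
        = ∑ k ∈ Finset.Icc 1 n, ∑ i, (c i * rt i ^ r) * (P.eval (k:ℂ) * (rt i ^ h) ^ k) := by
          refine Finset.sum_congr rfl (fun k _ => ?_)
          rw [hsrep (h * (k:ℤ) + r), Finset.mul_sum]
          refine Finset.sum_congr rfl (fun i _ => ?_)
          rw [zpow_add₀ (hrt0 i), _root_.zpow_mul, zpow_natCast]
          ring
      _ = ∑ i, ∑ k ∈ Finset.Icc 1 n, (c i * rt i ^ r) * (P.eval (k:ℂ) * (rt i ^ h) ^ k) :=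
          Finset.sum_comm
      _ = ∑ i, (c i * rt i ^ r) * ((A i).eval (n:ℂ) * (rt i ^ h) ^ n - (A i).eval 0) := by
          refine Finset.sum_congr rfl (fun i _ => ?_)
          rw [← Finset.mul_sum, tele_sum (rt i ^ h) P (A i) (hA i) n]
  rw [step1]
  have step2 : ∀ i : Fin m, (c i * rt i ^ r) * ((A i).eval (n:ℂ) * (rt i ^ h) ^ n - (A i).eval 0)
      = (A i).eval (n:ℂ) * (c i * rt i ^ (h * (n:ℤ) + r)) - c i * rt i ^ r * (A i).eval 0 := by
    intro i
    have e1 : rt i ^ (h * (n:ℤ) + r) = (rt i ^ h) ^ n * rt i ^ r := by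
      rw [zpow_add₀ (hrt0 i), _root_.zpow_mul, zpow_natCast]
    rw [e1]; ring
  rw [Finset.sum_congr rfl (fun i _ => step2 i), Finset.sum_sub_distrib]
  have step3 : ∑ i, (A i).eval (n:ℂ) * (c i * rt i ^ (h * (n:ℤ) + r))
      = ∑ j : Fin m, (∑ i, Polynomial.C (N⁻¹ i j) * A i).eval (n:ℂ)
          * s (((n:ℤ) + ((j:ℕ):ℤ) + 1) * h + r) := by
    calc ∑ i, (A i).eval (n:ℂ) * (c i * rt i ^ (h * (n:ℤ) + r))
        = ∑ i, ∑ j : Fin m, (A i).eval (n:ℂ) * (N⁻¹ i j * s (((n:ℤ) + ((j:ℕ):ℤ) + 1) * h + r)) := by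
          refine Finset.sum_congr rfl (fun i _ => ?_)
          rw [hkey n i, Finset.mul_sum]
      _ = ∑ j : Fin m, ∑ i, (A i).eval (n:ℂ) * (N⁻¹ i j * s (((n:ℤ) + ((j:ℕ):ℤ) + 1) * h + r)) :=
          Finset.sum_comm
      _ = _ := by
          refine Finset.sum_congr rfl (fun j _ => ?_)
          rw [Polynomial.eval_finset_sum, Finset.sum_mul]
          refine Finset.sum_congr rfl (fun i _ => ?_)
          rw [Polynomial.eval_mul, Polynomial.eval_C]
          ring
  rw [step3, Polynomial.eval_C]
  ring
end

section
/- Let q be a positive integer, c_1, ..., c_q nonzero complex numbers, and b_1, ..., b_q ∈ (0, 2π) distinct real numbers. Then the limit, as n → ∞ over positive integers n, of c_1·exp(i n b_1) + c_2·exp(i n b_2) + ⋯ + c_q·exp(i n b_q) does not exist (the sequence does not converge to any complex number). -/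
open Filter Finset Complex

lemma exp_I_ne_one' {θ : ℝ} (h0 : θ ≠ 0) (habs : |θ| < 2*Real.pi) :
    Complex.exp (Complex.I * θ) ≠ 1 := by
  intro h
  rw [Complex.exp_eq_one_iff] at h
  obtain ⟨m, hm⟩ := h
  have h1 : (θ:ℂ) * Complex.I = ((m:ℝ) * (2*Real.pi) : ℝ) * Complex.I := by
    push_cast
    linear_combination hm
  have h2 : θ = (m:ℝ) * (2*Real.pi) := by
    exact_mod_cast mul_right_cancel₀ Complex.I_ne_zero h1
  rcases eq_or_ne m 0 with rfl | hm0
  · simp at h2; exact h0 h2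
  · have : (1:ℝ) ≤ |(m:ℝ)| := by exact_mod_cast Int.one_le_abs hm0
    have hpi : (0:ℝ) < 2*Real.pi := by positivity
    rw [h2, abs_mul, abs_of_pos hpi] at habs
    nlinarith

lemma norm_exp_I_mul (θ : ℝ) : ‖Complex.exp (Complex.I * θ)‖ = 1 := by
  rw [mul_comm, Complex.norm_exp_ofReal_mul_I]

lemma avg_pow_zero {z : ℂ} (hz : z ≠ 1) (hz1 : ‖z‖ = 1) :
    Tendsto (fun N : ℕ => (N⁻¹:ℝ) • ∑ n ∈ range N, z^n) atTop (nhds 0) := by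
  refine squeeze_zero_norm (a := fun N : ℕ => (2 / ‖z - 1‖) * (N:ℝ)⁻¹) (fun N => ?_) ?_
  · have hz0 : (0:ℝ) < ‖z - 1‖ := by
      rw [norm_pos_iff]; exact sub_ne_zero.mpr hz
    have h2 : ‖z^N - 1‖ ≤ 2 := by
      calc ‖z^N - 1‖ ≤ ‖z^N‖ + ‖(1:ℂ)‖ := norm_sub_le _ _
        _ = 2 := by rw [norm_pow, hz1]; norm_num
    have key : ‖∑ n ∈ range N, z^n‖ ≤ 2 / ‖z - 1‖ := by
      rw [geom_sum_eq hz, norm_div]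
      gcongr
    rw [norm_smul, norm_inv, Real.norm_natCast, mul_comm]
    have hN : (0:ℝ) ≤ (N:ℝ)⁻¹ := by positivity
    exact mul_le_mul_of_nonneg_right key hN
  · simpa using tendsto_const_nhds.mul (tendsto_inv_atTop_nhds_zero_nat (𝕜 := ℝ))

lemma avg_pow_one : Tendsto (fun N : ℕ => (N⁻¹:ℝ) • ∑ n ∈ range N, (1:ℂ)^n) atTop (nhds 1) := by
  apply Tendsto.congr' _ (tendsto_const_nhds (x := (1:ℂ)))
  filter_upwards [eventually_ge_atTop 1] with N hN
  have hN0 : (N:ℝ) ≠ 0 := by positivity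
  simp only [one_pow, Finset.sum_const, Finset.card_range, nsmul_eq_mul, mul_one,
    Complex.real_smul]
  push_cast
  rw [inv_mul_cancel₀ (by exact_mod_cast hN0)]

/-- Lemma 2.6 of the paper: for `q ≥ 1`, nonzero complex `c_1,…,c_q` and
distinct reals `b_1,…,b_q ∈ (0, 2π)`, the sequence
`n ↦ c_1·exp(i n b_1) + ⋯ + c_q·exp(i n b_q)` (over positive integers `n`) converges to no
complex number. -/
theorem stmt_6 (q : ℕ) (hq : 0 < q) (c : Fin q → ℂ) (hc : ∀ k, c k ≠ 0)
    (b : Fin q → ℝ) (hb : ∀ k, b k ∈ Set.Ioo 0 (2 * Real.pi))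
    (hbinj : Function.Injective b) :
    ¬ ∃ T : ℂ, Filter.Tendsto
      (fun n : ℕ => ∑ k : Fin q, c k * Complex.exp (Complex.I * (n : ℂ) * ((b k : ℝ) : ℂ)))
      Filter.atTop (nhds T) := by
  rintro ⟨T, hT⟩
  let j : Fin q := ⟨0, hq⟩
  let e : Fin q → ℂ := fun k => Complex.exp (Complex.I * (b k : ℂ))
  have hnorm : ∀ k, ‖e k‖ = 1 := fun k => norm_exp_I_mul _
  have hexp : ∀ (k) (n : ℕ), Complex.exp (Complex.I * (n : ℂ) * (b k : ℂ)) = (e k)^n := by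
    intro k n
    rw [show Complex.I * (n:ℂ) * (b k:ℂ) = n * (Complex.I * (b k:ℂ)) by ring,
      Complex.exp_nat_mul]
  let w : ℂ := (e j)⁻¹
  have hwnorm : ‖w‖ = 1 := by rw [norm_inv, hnorm]; norm_num
  have hej : e j ≠ 1 :=
    exp_I_ne_one' (ne_of_gt (hb j).1) (by rw [abs_of_pos (hb j).1]; exact (hb j).2)
  have hw1 : w ≠ 1 := by
    intro h
    apply hej
    rw [← inv_inv (e j)]
    show w⁻¹ = 1
    rw [h, inv_one]
  let f : ℕ → ℂ := fun n => ∑ k, c k * Complex.exp (Complex.I * (n:ℂ) * ((b k : ℝ):ℂ))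
  let F : ℕ → ℂ := fun n => f n * w^n
  -- the k-th "rotated" exponential
  have hz : ∀ k, k ≠ j → (e k * w ≠ 1 ∧ ‖e k * w‖ = 1) := by
    intro k hk
    have hval : e k * w = Complex.exp (Complex.I * ((b k - b j : ℝ):ℂ)) := by
      show Complex.exp (Complex.I * (b k : ℂ)) * (Complex.exp (Complex.I * (b j : ℂ)))⁻¹ = _
      rw [← Complex.exp_neg, ← Complex.exp_add]
      congr 1
      push_cast
      ring
    constructor
    · rw [hval]
      apply exp_I_ne_one'
      · exact sub_ne_zero.mpr fun h => hk (hbinj h)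
      · have h1 := hb k; have h2 := hb j
        rw [abs_sub_lt_iff]
        constructor <;> [linarith [h1.2, h2.1]; linarith [h2.2, h1.1]]
    · rw [hval]; exact norm_exp_I_mul _
  have hzj : e j * w = 1 := mul_inv_cancel₀ (Complex.exp_ne_zero _)
  -- Step 1: Cesàro average of F tends to c j
  have key1 : Tendsto (fun N : ℕ => (N⁻¹:ℝ) • ∑ n ∈ range N, F n) atTop (nhds (c j)) := by
    have hFsum : ∀ N : ℕ, (N⁻¹:ℝ) • ∑ n ∈ range N, F n
        = ∑ k, c k * ((N⁻¹:ℝ) • ∑ n ∈ range N, (e k * w)^n) := by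
      intro N
      have hFn : ∀ n : ℕ, F n = ∑ k, c k * (e k * w)^n := by
        intro n
        show f n * w^n = _
        show (∑ k, c k * Complex.exp (Complex.I * (n:ℂ) * ((b k : ℝ):ℂ))) * w^n = _
        rw [Finset.sum_mul]
        apply Finset.sum_congr rfl
        intro k _
        rw [hexp, mul_pow]
        ring
      simp only [hFn]
      rw [Finset.sum_comm (s := range N)]  -- swap? may fail; try below
      rw [Finset.smul_sum]
      apply Finset.sum_congr rfl
      intro k _
      rw [← Finset.mul_sum, mul_smul_comm]
    rw [show c j = ∑ k, c k * (if k = j then (1:ℂ) else 0) by simp]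
    apply Tendsto.congr (fun N => (hFsum N).symm)
    apply tendsto_finset_sum
    intro k _
    by_cases hk : k = j
    · rw [hk]
      simp only [if_pos rfl, mul_one, hzj]
      simpa using tendsto_const_nhds.mul avg_pow_one
    · simp only [if_neg hk, mul_zero]
      have := (hz k hk)
      simpa using tendsto_const_nhds.mul (avg_pow_zero this.1 this.2)
  -- Step 2: Cesàro average of F tends to 0
  have key2 : Tendsto (fun N : ℕ => (N⁻¹:ℝ) • ∑ n ∈ range N, F n) atTop (nhds 0) := by
    have hg : Tendsto (fun n : ℕ => (f n - T) * w^n) atTop (nhds 0) := by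
      apply squeeze_zero_norm (a := fun n : ℕ => ‖f n - T‖)
      · intro n
        rw [norm_mul, norm_pow, hwnorm, one_pow, mul_one]
      · have := tendsto_sub_nhds_zero_iff.mpr hT
        simpa using this.norm
    have hA := hg.cesaro_smul
    have hB : Tendsto (fun N : ℕ => T * ((N⁻¹:ℝ) • ∑ n ∈ range N, w^n)) atTop (nhds 0) := by
      simpa using tendsto_const_nhds.mul (avg_pow_zero hw1 hwnorm)
    have := hA.add hB
    rw [add_zero] at this
    apply this.congr
    intro N
    rw [Finset.smul_sum, Finset.smul_sum, Finset.mul_sum, ← Finset.sum_add_distrib,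
      Finset.smul_sum]
    apply Finset.sum_congr rfl
    intro n _
    rw [mul_smul_comm, ← smul_add]
    congr 1
    show (f n - T) * w^n + T * w^n = f n * w^n
    ring
  have : c j = 0 := tendsto_nhds_unique key1 key2
  exact hc j this
end
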